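/- arXiv:1910.09140 — 6 statements merged into one kernel-verified Lean document; each statement's English description precedes it below -/
import Mathlib

section
/- Let K be a finite index set, let Q₀ be an n×n real symmetric positive definite matrix, and for each k ∈ K let Q_k be an n×n real symmetric positive semidefinite matrix. Then the set function f(F) := log det(Q₀ + Σ_{k∈F} Q_k) − log det(Q₀), defined for F ⊆ K, is normalized, monotone, and submodular. -/
open Matrix

section AuxLemmas

variable {n : Type*} [Fintype n] [DecidableEq n]

open scoped MatrixOrder in
/-- square root of a PSD real matrix (replacement for the removed Mathlib definition). -/
noncomputable def Matrix.PosSemidef.sqrt {A : Matrix n n ℝ} (_hA : A.PosSemidef) :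
    Matrix n n ℝ := CFC.sqrt A

open scoped MatrixOrder in
lemma Matrix.PosSemidef.sqrt_mul_self {A : Matrix n n ℝ} (hA : A.PosSemidef) :
    hA.sqrt * hA.sqrt = A :=
  CFC.sqrt_mul_sqrt_self A hA.nonneg

open scoped MatrixOrder in
lemma Matrix.PosSemidef.posSemidef_sqrt {A : Matrix n n ℝ} (hA : A.PosSemidef) :
    hA.sqrt.PosSemidef :=
  Matrix.nonneg_iff_posSemidef.mp (CFC.sqrt_nonneg A)

/-- For PSD `P`, `det (1 + P) ≥ 1`. -/
lemma aux_one_le_det_one_add {P : Matrix n n ℝ} (hP : P.PosSemidef) :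
    (1 : ℝ) ≤ (1 + P).det := by
  have h1P : (1 + P).PosSemidef := Matrix.PosSemidef.one.add hP
  have H : (1 + P).IsHermitian := h1P.1
  have key : ∀ i, (1:ℝ) ≤ H.eigenvalues i := by
    intro i
    set v : n → ℝ := ⇑(H.eigenvectorBasis i) with hv
    have hmv : (1 + P) *ᵥ v = H.eigenvalues i • v := H.mulVec_eigenvectorBasis i
    have hvne : v ≠ 0 := by
      intro h0
      have hb1 : ‖H.eigenvectorBasis i‖ = 1 := H.eigenvectorBasis.orthonormal.1 i
      have h00 : H.eigenvectorBasis i = 0 := by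
        ext j; exact congrFun h0 j
      rw [h00, norm_zero] at hb1
      norm_num at hb1
    have hPv : P *ᵥ v = (H.eigenvalues i - 1) • v := by
      have h1 : v + P *ᵥ v = H.eigenvalues i • v := by
        rw [← hmv, add_mulVec, one_mulVec]
      have h2 := sub_eq_of_eq_add' h1.symm
      rw [← h2, sub_smul, one_smul]
    have h2 := hP.dotProduct_mulVec_nonneg v
    rw [hPv, dotProduct_smul] at h2
    have hpos : 0 < dotProduct (star v) v := dotProduct_star_self_pos_iff.mpr hvne
    have h3 : (0:ℝ) ≤ (H.eigenvalues i - 1) * dotProduct (star v) v := h2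
    nlinarith
  rw [H.det_eq_prod_eigenvalues]
  show (1:ℝ) ≤ ∏ i, H.eigenvalues i
  calc (1:ℝ) = ∏ _i : n, 1 := by simp
    _ ≤ ∏ i, H.eigenvalues i := Finset.prod_le_prod (by simp) (fun i _ => key i)

/-- For PD `A` and PSD `D`, `det A ≤ det (A + D)`. -/
lemma aux_det_le_det_add {A D : Matrix n n ℝ} (hA : A.PosDef) (hD : D.PosSemidef) :
    A.det ≤ (A + D).det := by
  obtain ⟨B, hB⟩ : ∃ B : Matrix n n ℝ, A = Bᴴ * B :=
    ⟨hA.posSemidef.sqrt, by rw [hA.posSemidef.posSemidef_sqrt.1, hA.posSemidef.sqrt_mul_self]⟩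
  have hd : A.det = B.det * B.det := by
    rw [hB, det_mul, det_conjTranspose, star_trivial]
  have hdetB : B.det ≠ 0 := by
    intro h
    rw [h, mul_zero] at hd
    exact hA.det_pos.ne' hd
  have hdetBH : (Bᴴ).det ≠ 0 := by
    rw [det_conjTranspose, star_trivial]; exact hdetB
  have h1 : (1 : ℝ) ≤ (1 + (B⁻¹)ᴴ * D * B⁻¹).det :=
    aux_one_le_det_one_add (hD.conjTranspose_mul_mul_same B⁻¹)
  have key : A + D = Bᴴ * (1 + (B⁻¹)ᴴ * D * B⁻¹) * B := by
    rw [conjTranspose_nonsing_inv, mul_add, add_mul, mul_one, ← hB]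
    congr 1
    symm
    calc Bᴴ * ((Bᴴ)⁻¹ * D * B⁻¹) * B
        = (Bᴴ * (Bᴴ)⁻¹) * D * (B⁻¹ * B) := by noncomm_ring
      _ = D := by
          rw [mul_nonsing_inv _ (isUnit_iff_ne_zero.mpr hdetBH),
            nonsing_inv_mul _ (isUnit_iff_ne_zero.mpr hdetB), one_mul, mul_one]
  rw [key, det_mul, det_mul, det_conjTranspose, star_trivial]
  nlinarith [hA.det_pos]

/-- helper: if `W * W = A⁻¹` then `W * A * W = 1`. -/
lemma aux_sandwich {A W : Matrix n n ℝ} (hWW : W * W = A⁻¹)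
    (hAdet : IsUnit A.det) (hWdet : IsUnit W.det) : W * A * W = 1 := by
  have h1 : A * W * W = 1 := by
    rw [Matrix.mul_assoc, hWW, mul_nonsing_inv _ hAdet]
  have h2 : A * W = W⁻¹ := by
    have h3 := congrArg (· * W⁻¹) h1
    simpa [Matrix.mul_assoc, mul_nonsing_inv _ hWdet] using h3
  rw [Matrix.mul_assoc, h2, mul_nonsing_inv _ hWdet]

/-- Inverse is antitone: for PD `M` and PSD `T`, `M⁻¹ - (M+T)⁻¹` is PSD. -/
lemma aux_inv_antitone {M T : Matrix n n ℝ} (hM : M.PosDef) (hT : T.PosSemidef) :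
    (M⁻¹ - (M + T)⁻¹).PosSemidef := by
  set N := M + T with hNdef
  have hN : N.PosDef := hM.add_posSemidef hT
  have hMinv : M⁻¹.PosDef := hM.inv
  set W := hMinv.posSemidef.sqrt with hWdef
  have hWW : W * W = M⁻¹ := hMinv.posSemidef.sqrt_mul_self
  have hWH : Wᴴ = W := hMinv.posSemidef.posSemidef_sqrt.1
  have hMdet : IsUnit M.det := isUnit_iff_ne_zero.mpr hM.det_pos.ne'
  have hNdet : IsUnit N.det := isUnit_iff_ne_zero.mpr hN.det_pos.ne'
  have hMidet : IsUnit M⁻¹.det := M.isUnit_nonsing_inv_det hMdet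
  have hWdet : IsUnit W.det := by
    refine isUnit_iff_ne_zero.mpr fun h => ?_
    have h4 : M⁻¹.det = W.det * W.det := by rw [← hWW, det_mul]
    rw [h, mul_zero] at h4
    exact hMinv.det_pos.ne' h4
  set C := W * N * W with hCdef
  have hC : C.PosSemidef := by
    have h5 := hN.posSemidef.conjTranspose_mul_mul_same W
    rwa [hWH] at h5
  have hCdet : IsUnit C.det := by
    rw [hCdef, det_mul, det_mul]
    exact (hWdet.mul hNdet).mul hWdet
  have hCinv : C⁻¹.PosSemidef := hC.inv
  set G := hCinv.sqrt with hGdef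
  have hGG : G * G = C⁻¹ := hCinv.sqrt_mul_self
  have hGH : Gᴴ = G := hCinv.posSemidef_sqrt.1
  have hCidet : IsUnit C⁻¹.det := C.isUnit_nonsing_inv_det hCdet
  have hGdet : IsUnit G.det := by
    refine isUnit_iff_ne_zero.mpr fun h => ?_
    have h6 : C⁻¹.det = G.det * G.det := by rw [← hGG, det_mul]
    rw [h, mul_zero] at h6
    exact (isUnit_iff_ne_zero.mp hCidet) h6
  have hWMW : W * M * W = 1 := aux_sandwich hWW hMdet hWdet
  have hGCG : G * C * G = 1 := by
    refine aux_sandwich ?_ hCdet hGdet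
    rw [hGG]
  set E := W * G * W with hEdef
  have hEH : Eᴴ = E := by
    rw [hEdef, conjTranspose_mul, conjTranspose_mul, hWH, hGH, Matrix.mul_assoc]
  have hWCW : W * C⁻¹ * W = N⁻¹ := by
    have h7 : C⁻¹ = W⁻¹ * (N⁻¹ * W⁻¹) := by
      rw [hCdef, Matrix.mul_inv_rev, Matrix.mul_inv_rev]
    rw [h7, ← Matrix.mul_assoc, ← Matrix.mul_assoc, mul_nonsing_inv _ hWdet, one_mul,
      Matrix.mul_assoc, nonsing_inv_mul _ hWdet, mul_one]
  have hWTW : W * T * W = C - 1 := by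
    have h8 : T = N - M := by rw [hNdef, add_sub_cancel_left]
    rw [h8, Matrix.mul_sub, Matrix.sub_mul, hWMW]
  have key : M⁻¹ - N⁻¹ = Eᴴ * T * E := by
    rw [hEH, hEdef]
    calc M⁻¹ - N⁻¹
        = W * W - W * C⁻¹ * W := by rw [hWW, hWCW]
      _ = W * (1 - C⁻¹) * W := by noncomm_ring
      _ = W * (G * C * G - G * G) * W := by rw [hGCG, hGG]
      _ = W * (G * (C - 1) * G) * W := by noncomm_ring
      _ = W * (G * (W * T * W) * G) * W := by rw [hWTW]
      _ = W * G * W * T * (W * G * W) := by noncomm_ring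
  rw [key]
  exact hT.conjTranspose_mul_mul_same E

/-- `det(A + S) = det A * det (1 + √S A⁻¹ √S)` for PD `A`, PSD `S`. -/
lemma aux_det_split {A S : Matrix n n ℝ} (hA : A.PosDef) (hS : S.PosSemidef) :
    (A + S).det = A.det * (1 + hS.sqrt * A⁻¹ * hS.sqrt).det := by
  set R := hS.sqrt with hRdef
  have hRR : R * R = S := hS.sqrt_mul_self
  have hAdet : IsUnit A.det := isUnit_iff_ne_zero.mpr hA.det_pos.ne'
  have key : A + S = A * (1 + A⁻¹ * R * R) := by
    rw [Matrix.mul_add, mul_one]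
    congr 1
    rw [← Matrix.mul_assoc, ← Matrix.mul_assoc, mul_nonsing_inv _ hAdet, one_mul, hRR]
  rw [key, det_mul]
  congr 1
  have h := Matrix.det_one_add_mul_comm (A⁻¹ * R) R
  rw [Matrix.mul_assoc] at h ⊢
  rw [h, ← Matrix.mul_assoc]

/-- Core submodularity inequality for determinants. -/
lemma aux_det_submod {M S T : Matrix n n ℝ} (hM : M.PosDef) (hS : S.PosSemidef)
    (hT : T.PosSemidef) :
    (M + T + S).det * M.det ≤ (M + S).det * (M + T).det := by
  set N := M + T with hNdef
  have hN : N.PosDef := hM.add_posSemidef hT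
  set R := hS.sqrt with hRdef
  have hRH : Rᴴ = R := hS.posSemidef_sqrt.1
  have hEN : (R * N⁻¹ * R).PosSemidef := by
    have h := hN.inv.posSemidef.conjTranspose_mul_mul_same R
    rwa [hRH] at h
  have hdiff : (R * M⁻¹ * R - R * N⁻¹ * R).PosSemidef := by
    have h := (aux_inv_antitone hM hT).conjTranspose_mul_mul_same R
    rw [hRH, ← hNdef] at h
    have e : R * (M⁻¹ - N⁻¹) * R = R * M⁻¹ * R - R * N⁻¹ * R := by noncomm_ring
    rwa [e] at h
  have hmono : (1 + R * N⁻¹ * R).det ≤ (1 + R * M⁻¹ * R).det := by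
    have h1 : (1 + R * N⁻¹ * R).PosDef := Matrix.PosDef.one.add_posSemidef hEN
    have h := aux_det_le_det_add h1 hdiff
    have e : 1 + R * N⁻¹ * R + (R * M⁻¹ * R - R * N⁻¹ * R) = 1 + R * M⁻¹ * R := by
      noncomm_ring
    rwa [e] at h
  have hXpos : (0:ℝ) < (1 + R * N⁻¹ * R).det := (Matrix.PosDef.one.add_posSemidef hEN).det_pos
  rw [show M + T + S = N + S from rfl, aux_det_split hM hS, aux_det_split hN hS, ← hRdef]
  nlinarith [hM.det_pos, hN.det_pos, mul_pos hM.det_pos hN.det_pos, hmono, hXpos]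

end AuxLemmas

/-- The log-det Fisher information criterion
`f(F) = log det(Q₀ + ∑_{k∈F} Q_k) − log det Q₀`
is normalized, monotone, and submodular. -/
theorem stmt_0 {n K : Type*} [Fintype n] [DecidableEq n] [Fintype K] [DecidableEq K]
    (Q0 : Matrix n n ℝ) (Q : K → Matrix n n ℝ)
    (hQ0 : Q0.PosDef) (hQ : ∀ k, (Q k).PosSemidef)
    (f : Finset K → ℝ)
    (hf : ∀ F : Finset K, f F = Real.log (Q0 + ∑ k ∈ F, Q k).det - Real.log Q0.det) :
    f ∅ = 0 ∧
    (∀ X Y : Finset K, X ⊆ Y → f X ≤ f Y) ∧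
    (∀ X Y : Finset K, X ⊆ Y → ∀ s, s ∉ Y →
      f (insert s Y) - f Y ≤ f (insert s X) - f X) := by
  have sumPSD : ∀ F : Finset K, (∑ k ∈ F, Q k).PosSemidef := fun F =>
    Finset.sum_induction Q _ (fun a b ha hb => ha.add hb) Matrix.PosSemidef.zero
      (fun k _ => hQ k)
  have PD : ∀ F : Finset K, (Q0 + ∑ k ∈ F, Q k).PosDef := fun F =>
    hQ0.add_posSemidef (sumPSD F)
  refine ⟨by rw [hf]; simp, ?_, ?_⟩
  · intro X Y hXY
    rw [hf X, hf Y]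
    have hsum : (Q0 + ∑ k ∈ X, Q k) + ∑ k ∈ Y \ X, Q k = Q0 + ∑ k ∈ Y, Q k := by
      rw [add_assoc, add_comm (∑ k ∈ X, Q k), Finset.sum_sdiff hXY]
    have hle : (Q0 + ∑ k ∈ X, Q k).det ≤ (Q0 + ∑ k ∈ Y, Q k).det := by
      rw [← hsum]
      exact aux_det_le_det_add (PD X) (sumPSD (Y \ X))
    have := Real.log_le_log (PD X).det_pos hle
    linarith
  · intro X Y hXY s hsY
    have hsX : s ∉ X := fun h => hsY (hXY h)
    set M := Q0 + ∑ k ∈ X, Q k with hM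
    set T := ∑ k ∈ Y \ X, Q k with hT
    set S := Q s with hS
    have hMPD : M.PosDef := PD X
    have hTpsd : T.PosSemidef := sumPSD (Y \ X)
    have hSpsd : S.PosSemidef := hQ s
    have hNPD : (M + T).PosDef := hMPD.add_posSemidef hTpsd
    have hMSPD : (M + S).PosDef := hMPD.add_posSemidef hSpsd
    have hMTSPD : (M + T + S).PosDef := hNPD.add_posSemidef hSpsd
    have eY : Q0 + ∑ k ∈ Y, Q k = M + T := by
      rw [hM, hT, add_assoc, add_comm (∑ k ∈ X, Q k), Finset.sum_sdiff hXY]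
    have eX' : Q0 + ∑ k ∈ insert s X, Q k = M + S := by
      rw [Finset.sum_insert hsX, hM, hS]
      abel
    have eY' : Q0 + ∑ k ∈ insert s Y, Q k = M + T + S := by
      rw [Finset.sum_insert hsY,
        show Q0 + (Q s + ∑ k ∈ Y, Q k) = (Q0 + ∑ k ∈ Y, Q k) + Q s from by abel, eY]
    have hcore := aux_det_submod hMPD hSpsd hTpsd
    have hlog : Real.log ((M + T + S).det * M.det) ≤
        Real.log ((M + S).det * (M + T).det) :=
      Real.log_le_log (mul_pos hMTSPD.det_pos hMPD.det_pos) hcore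
    rw [Real.log_mul hMTSPD.det_pos.ne' hMPD.det_pos.ne',
      Real.log_mul hMSPD.det_pos.ne' hNPD.det_pos.ne'] at hlog
    rw [hf, hf, hf, hf, eY, eX', eY']
    linarith
end

section
/- Let A and B be n×n real symmetric positive definite matrices with B − A positive semidefinite (i.e., A ⪯ B in the Loewner order), and let S be an n×n real symmetric positive semidefinite matrix. Then log det(B + S) − log det(B) ≤ log det(A + S) − log det(A) (diminishing returns of the log-determinant under PSD updates). -/
open Matrix
open scoped MatrixOrder

section Aux

variable {n : Type*} [Fintype n] [DecidableEq n]

/-- A positive semidefinite real matrix with nonzero determinant is positive definite. -/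
lemma aux_posDef_of_det_ne_zero {M : Matrix n n ℝ} (hM : M.PosSemidef) (h : M.det ≠ 0) :
    M.PosDef := by
  refine Matrix.PosDef.of_dotProduct_mulVec_pos hM.1 (fun x hx => ?_)
  rcases lt_or_eq_of_le (hM.dotProduct_mulVec_nonneg x) with h' | h'
  · exact h'
  · exfalso
    have hMx : M *ᵥ x = 0 := (hM.dotProduct_mulVec_zero_iff x).mp h'.symm
    have : x = 0 := by
      have hx' : x = (M⁻¹ * M) *ᵥ x := by
        rw [Matrix.nonsing_inv_mul M (isUnit_iff_ne_zero.mpr h), Matrix.one_mulVec]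
      rw [← Matrix.mulVec_mulVec, hMx, Matrix.mulVec_zero] at hx'
      exact hx'
    exact hx this

/-- `1 ≤ det (1 + M)` for `M` real positive semidefinite. -/
lemma aux_one_le_det_one_add_s2 {M : Matrix n n ℝ} (hM : M.PosSemidef) :
    1 ≤ (1 + M).det := by
  set U : Matrix n n ℝ := (hM.1.eigenvectorUnitary : Matrix n n ℝ) with hU
  have hspec := hM.1.spectral_theorem
  have hUU : U * star U = 1 := Unitary.mul_star_self_of_mem hM.1.eigenvectorUnitary.2
  have h1 : (1 : Matrix n n ℝ) + M
      = U * (1 + Matrix.diagonal (RCLike.ofReal ∘ hM.1.eigenvalues)) * star U := by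
    rw [Matrix.mul_add, Matrix.add_mul, Matrix.mul_one, hUU, hU]
    exact congrArg (1 + ·) hspec
  have hUdet : U.det * (star U).det = 1 := by
    rw [← Matrix.det_mul, hUU, Matrix.det_one]
  rw [h1, Matrix.det_mul, Matrix.det_mul, mul_right_comm, hUdet, one_mul]
  have h2 : (1 : Matrix n n ℝ) + Matrix.diagonal (RCLike.ofReal ∘ hM.1.eigenvalues)
      = Matrix.diagonal (fun i => 1 + hM.1.eigenvalues i) := by
    rw [← Matrix.diagonal_one, Matrix.diagonal_add]
    rfl
  rw [h2, Matrix.det_diagonal]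
  calc (1 : ℝ) = ∏ _i : n, 1 := by simp
    _ ≤ ∏ i, (1 + hM.1.eigenvalues i) := by
        apply Finset.prod_le_prod
        · intro i _; norm_num
        · intro i _
          have := hM.eigenvalues_nonneg i
          linarith

/-- `det P ≤ det (P + Q)` for `P` positive definite and `Q` positive semidefinite. -/
lemma aux_det_le_det_add_s2 {P Q : Matrix n n ℝ} (hP : P.PosDef) (hQ : Q.PosSemidef) :
    P.det ≤ (P + Q).det := by
  have hT : (CFC.sqrt Q) * (CFC.sqrt Q) = Q := CFC.sqrt_mul_sqrt_self Q hQ.nonneg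
  have hTherm : (CFC.sqrt Q)ᴴ = (CFC.sqrt Q) := (CFC.sqrt_nonneg Q).posSemidef.1
  have hPdet : IsUnit P.det := isUnit_iff_ne_zero.mpr hP.det_pos.ne'
  have h1 := Matrix.det_add_mul (A := P) (CFC.sqrt Q) (CFC.sqrt Q) hPdet
  rw [hT] at h1
  have hpsd : ((CFC.sqrt Q) * P⁻¹ * (CFC.sqrt Q)).PosSemidef := by
    have := hP.inv.posSemidef.conjTranspose_mul_mul_same (CFC.sqrt Q)
    rwa [hTherm] at this
  have := aux_one_le_det_one_add_s2 hpsd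
  rw [h1]
  nlinarith [hP.det_pos]

/-- Anti-monotonicity of the inverse: `A ⪯ B` implies `B⁻¹ ⪯ A⁻¹` for positive definite reals. -/
lemma aux_inv_sub_inv_posSemidef {A B : Matrix n n ℝ} (hA : A.PosDef) (hB : B.PosDef)
    (hAB : (B - A).PosSemidef) : (A⁻¹ - B⁻¹).PosSemidef := by
  -- square root of A
  set R := (CFC.sqrt A) with hRdef
  have hRR : R * R = A := CFC.sqrt_mul_sqrt_self A hA.posSemidef.nonneg
  have hRdet : R.det ≠ 0 := by
    intro h
    have : A.det = 0 := by rw [← hRR, Matrix.det_mul, h, mul_zero]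
    exact hA.det_pos.ne' this
  have hRpd : R.PosDef := aux_posDef_of_det_ne_zero (CFC.sqrt_nonneg A).posSemidef hRdet
  set C := R⁻¹ with hCdef
  have hCpd : C.PosDef := hRpd.inv
  have hCherm : Cᴴ = C := hCpd.1
  have hCR : C * R = 1 := Matrix.nonsing_inv_mul R (isUnit_iff_ne_zero.mpr hRdet)
  have hRC : R * C = 1 := Matrix.mul_nonsing_inv R (isUnit_iff_ne_zero.mpr hRdet)
  have hCC : C * C = A⁻¹ := by rw [hCdef, ← Matrix.mul_inv_rev, hRR]
  have hCAC : C * A * C = 1 := by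
    rw [← hRR]
    simp [Matrix.mul_assoc, hRC, hCR]
  -- N = C B C
  set N := C * B * C with hNdef
  have hNpsd : N.PosSemidef := by
    have := hB.posSemidef.conjTranspose_mul_mul_same C
    rwa [hCherm] at this
  have hNdet : N.det ≠ 0 := by
    rw [hNdef, Matrix.det_mul, Matrix.det_mul]
    have hCdet : C.det ≠ 0 := hCpd.det_pos.ne'
    exact mul_ne_zero (mul_ne_zero hCdet hB.det_pos.ne') hCdet
  have hNpd : N.PosDef := aux_posDef_of_det_ne_zero hNpsd hNdet
  have hN1 : (N - 1).PosSemidef := by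
    have h := hAB.conjTranspose_mul_mul_same C
    rw [hCherm, Matrix.mul_sub, Matrix.sub_mul, hCAC, ← hNdef] at h
    exact h
  -- square root of N
  set RN := (CFC.sqrt N) with hRNdef
  have hRNRN : RN * RN = N := CFC.sqrt_mul_sqrt_self N hNpd.posSemidef.nonneg
  have hRNdet : RN.det ≠ 0 := by
    intro h
    have : N.det = 0 := by rw [← hRNRN, Matrix.det_mul, h, mul_zero]
    exact hNdet this
  set D := RN⁻¹ with hDdef
  have hDherm : Dᴴ = D :=
    (aux_posDef_of_det_ne_zero (CFC.sqrt_nonneg N).posSemidef hRNdet).inv.1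
  have hDRN : D * RN = 1 := Matrix.nonsing_inv_mul RN (isUnit_iff_ne_zero.mpr hRNdet)
  have hRND : RN * D = 1 := Matrix.mul_nonsing_inv RN (isUnit_iff_ne_zero.mpr hRNdet)
  have hDD : D * D = N⁻¹ := by rw [hDdef, ← Matrix.mul_inv_rev, hRNRN]
  have hDND : D * N * D = 1 := by
    rw [← hRNRN]
    simp [Matrix.mul_assoc, hRND, hDRN]
  have hkey : ((1 : Matrix n n ℝ) - N⁻¹).PosSemidef := by
    have h := hN1.conjTranspose_mul_mul_same D
    rwa [hDherm, Matrix.mul_sub, Matrix.mul_one, Matrix.sub_mul, hDND, hDD] at h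
  -- transport back
  have h := hkey.conjTranspose_mul_mul_same C
  rw [hCherm, Matrix.mul_sub, Matrix.mul_one, Matrix.sub_mul, hCC] at h
  have hCNC : C * N⁻¹ * C = B⁻¹ := by
    rw [hNdef, Matrix.mul_inv_rev, Matrix.mul_inv_rev]
    have hCinv : C⁻¹ = R := by rw [hCdef, Matrix.nonsing_inv_nonsing_inv R (isUnit_iff_ne_zero.mpr hRdet)]
    rw [hCinv, ← Matrix.mul_assoc, ← Matrix.mul_assoc, hCR, one_mul, Matrix.mul_assoc, hRC,
      Matrix.mul_one]
  rwa [hCNC] at h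

end Aux

/-- Diminishing returns of the log-determinant under PSD updates:
if `A ⪯ B` (both symmetric PD) and `S ⪰ 0`, then
`log det(B + S) − log det B ≤ log det(A + S) − log det A`. -/
theorem stmt_2 {n : Type*} [Fintype n] [DecidableEq n]
    (A B S : Matrix n n ℝ)
    (hA : A.PosDef) (hB : B.PosDef) (hAB : (B - A).PosSemidef) (hS : S.PosSemidef) :
    Real.log (B + S).det - Real.log B.det ≤ Real.log (A + S).det - Real.log A.det := by
  have hTT : (CFC.sqrt S) * (CFC.sqrt S) = S := CFC.sqrt_mul_sqrt_self S hS.nonneg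
  have hTherm : (CFC.sqrt S)ᴴ = (CFC.sqrt S) := (CFC.sqrt_nonneg S).posSemidef.1
  have hAdet : IsUnit A.det := isUnit_iff_ne_zero.mpr hA.det_pos.ne'
  have hBdet : IsUnit B.det := isUnit_iff_ne_zero.mpr hB.det_pos.ne'
  set MA := (CFC.sqrt S) * A⁻¹ * (CFC.sqrt S) with hMAdef
  set MB := (CFC.sqrt S) * B⁻¹ * (CFC.sqrt S) with hMBdef
  have hMApsd : MA.PosSemidef := by
    have := hA.inv.posSemidef.conjTranspose_mul_mul_same (CFC.sqrt S)
    rwa [hTherm] at this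
  have hMBpsd : MB.PosSemidef := by
    have := hB.inv.posSemidef.conjTranspose_mul_mul_same (CFC.sqrt S)
    rwa [hTherm] at this
  have h1 := Matrix.det_add_mul (A := A) (CFC.sqrt S) (CFC.sqrt S) hAdet
  rw [hTT, ← hMAdef] at h1
  have h2 := Matrix.det_add_mul (A := B) (CFC.sqrt S) (CFC.sqrt S) hBdet
  rw [hTT, ← hMBdef] at h2
  have hMBone : (1 : ℝ) ≤ (1 + MB).det := aux_one_le_det_one_add_s2 hMBpsd
  have hMAone : (1 : ℝ) ≤ (1 + MA).det := aux_one_le_det_one_add_s2 hMApsd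
  have hkey : (1 + MB).det ≤ (1 + MA).det := by
    have hdiff : (MA - MB).PosSemidef := by
      have hinv : (A⁻¹ - B⁻¹).PosSemidef := aux_inv_sub_inv_posSemidef hA hB hAB
      have := hinv.conjTranspose_mul_mul_same (CFC.sqrt S)
      rwa [hTherm, Matrix.mul_sub, Matrix.sub_mul, ← hMAdef, ← hMBdef] at this
    have hPB : (1 + MB).PosDef := Matrix.PosDef.one.add_posSemidef hMBpsd
    have heq : (1 : Matrix n n ℝ) + MA = (1 + MB) + (MA - MB) := by abel
    rw [heq]
    exact aux_det_le_det_add_s2 hPB hdiff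
  rw [h1, h2, Real.log_mul hAdet.ne_zero (by linarith : (1 + MA).det ≠ 0),
    Real.log_mul hBdet.ne_zero (by linarith : (1 + MB).det ≠ 0),
    add_sub_cancel_left, add_sub_cancel_left]
  exact Real.log_le_log (by linarith) hkey
end

section
/- Let K be a finite index set, let Q₀ be an n×n real symmetric positive definite matrix, and for each k ∈ K let Q_k be an n×n real symmetric positive semidefinite matrix. Let g be a real-valued function on n×n real matrices and suppose there is a map D assigning to each symmetric positive definite matrix A an n×n matrix D(A) such that: (i) g is Fréchet differentiable at every positive definite A with derivative H ↦ trace(D(A)ᵀ H); (ii) D(A) is symmetric positive semidefinite for every positive definite A; and (iii) D is antitone with respect to the Loewner order on positive definite matrices, i.e., A ⪰ B implies D(A) ⪯ D(B). Then the set function f(X) := g(Q₀ + Σ_{k∈X} Q_k), X ⊆ K, is monotone and submodular. -/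
attribute [local instance] Matrix.normedAddCommGroup Matrix.normedSpace

set_option linter.unusedSectionVars false
set_option maxHeartbeats 1000000

open Matrix

lemma psd_smul {n : Type*} [Fintype n] {S : Matrix n n ℝ} (hS : S.PosSemidef)
    {t : ℝ} (ht : 0 ≤ t) : (t • S).PosSemidef := by
  refine PosSemidef.of_dotProduct_mulVec_nonneg ?_ ?_
  · show (t • S)ᴴ = t • S
    rw [conjTranspose_smul, hS.1]
    simp
  · intro x
    have := hS.dotProduct_mulVec_nonneg x
    simp only [smul_mulVec, dotProduct_smul, smul_eq_mul]
    positivity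

lemma psd_trace_nonneg {n : Type*} [Fintype n] [DecidableEq n] {M : Matrix n n ℝ}
    (hM : M.PosSemidef) : 0 ≤ M.trace := by
  rw [Matrix.trace]
  refine Finset.sum_nonneg fun i _ => ?_
  have := hM.dotProduct_mulVec_nonneg (Pi.single i 1)
  simpa [Matrix.diag, mulVec_single, dotProduct, Pi.single_apply, ite_mul] using this

lemma trace_mul_psd_nonneg {n : Type*} [Fintype n] [DecidableEq n]
    {A B : Matrix n n ℝ} (hA : A.PosSemidef) (hB : B.PosSemidef) :
    0 ≤ (Aᵀ * B).trace := by
  have hAt : Aᵀ = A := by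
    ext i j
    simpa using congrFun (congrFun hA.1 i) j
  open scoped MatrixOrder in
  rw [hAt, ← CFC.sqrt_mul_sqrt_self A hA.nonneg, mul_assoc, trace_mul_comm]
  open scoped MatrixOrder in
  have hsq : (CFC.sqrt A).conjTranspose = CFC.sqrt A := (CFC.sqrt_nonneg A).posSemidef.1
  have hpsd : (CFC.sqrt A * B * (CFC.sqrt A)ᴴ).PosSemidef :=
    hB.mul_mul_conjTranspose_same (CFC.sqrt A)
  rw [hsq] at hpsd
  exact psd_trace_nonneg hpsd

section Calc

variable {n : Type*} [Fintype n] [DecidableEq n]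
  (g : Matrix n n ℝ → ℝ) (D : Matrix n n ℝ → Matrix n n ℝ)

lemma hasDerivAt_path (A S : Matrix n n ℝ) (t : ℝ) :
    HasDerivAt (fun t : ℝ => A + t • S) S t := by
  have h : HasDerivAt (fun t : ℝ => t • S) ((1:ℝ) • S) t :=
    (hasDerivAt_id t).smul_const S
  have := h.const_add A
  rwa [one_smul] at this

lemma key_deriv
    (hdiff : ∀ A : Matrix n n ℝ, A.PosDef →
      ∃ L : Matrix n n ℝ →L[ℝ] ℝ,
        (∀ H : Matrix n n ℝ, L H = ((D A).transpose * H).trace) ∧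
        HasFDerivAt g L A)
    (A S : Matrix n n ℝ) (t : ℝ) (hPD : (A + t • S).PosDef) :
    HasDerivAt (fun t : ℝ => g (A + t • S)) (((D (A + t • S)).transpose * S).trace) t := by
  obtain ⟨L, hL, hLd⟩ := hdiff _ hPD
  have := hLd.comp_hasDerivAt t (hasDerivAt_path A S t)
  exact this.congr_deriv (hL S)

lemma gmono
    (hdiff : ∀ A : Matrix n n ℝ, A.PosDef →
      ∃ L : Matrix n n ℝ →L[ℝ] ℝ,
        (∀ H : Matrix n n ℝ, L H = ((D A).transpose * H).trace) ∧
        HasFDerivAt g L A)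
    (hDpsd : ∀ A : Matrix n n ℝ, A.PosDef → (D A).PosSemidef)
    {A S : Matrix n n ℝ} (hA : A.PosDef) (hS : S.PosSemidef) :
    g A ≤ g (A + S) := by
  set φ : ℝ → ℝ := fun t => g (A + t • S) with hφ
  have hPD : ∀ t : ℝ, 0 ≤ t → (A + t • S).PosDef := fun t ht =>
    hA.add_posSemidef (psd_smul hS ht)
  have hder : ∀ t : ℝ, 0 ≤ t →
      HasDerivAt φ (((D (A + t • S)).transpose * S).trace) t := fun t ht =>
    key_deriv g D hdiff A S t (hPD t ht)
  have hmono : MonotoneOn φ (Set.Icc 0 1) := by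
    refine monotoneOn_of_deriv_nonneg (convex_Icc 0 1) ?_ ?_ ?_
    · intro t ht
      exact ((hder t ht.1).continuousAt).continuousWithinAt
    · intro t ht
      rw [interior_Icc] at ht
      exact ((hder t ht.1.le).differentiableAt).differentiableWithinAt
    · intro t ht
      rw [interior_Icc] at ht
      rw [(hder t ht.1.le).deriv]
      exact trace_mul_psd_nonneg (hDpsd _ (hPD t ht.1.le)) hS
  have := hmono (Set.mem_Icc.mpr ⟨le_refl 0, zero_le_one⟩)
    (Set.mem_Icc.mpr ⟨zero_le_one, le_refl 1⟩) zero_le_one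
  simpa [hφ] using this

lemma gsubmod
    (hdiff : ∀ A : Matrix n n ℝ, A.PosDef →
      ∃ L : Matrix n n ℝ →L[ℝ] ℝ,
        (∀ H : Matrix n n ℝ, L H = ((D A).transpose * H).trace) ∧
        HasFDerivAt g L A)
    (hDanti : ∀ A B : Matrix n n ℝ, A.PosDef → B.PosDef →
      (A - B).PosSemidef → (D B - D A).PosSemidef)
    {A P S : Matrix n n ℝ} (hA : A.PosDef) (hP : P.PosSemidef) (hS : S.PosSemidef) :
    g (A + P + S) - g (A + P) ≤ g (A + S) - g A := by
  set h : ℝ → ℝ := fun t => g ((A + P) + t • S) - g (A + t • S) with hh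
  have hPD1 : ∀ t : ℝ, 0 ≤ t → ((A + P) + t • S).PosDef := fun t ht =>
    (hA.add_posSemidef hP).add_posSemidef (psd_smul hS ht)
  have hPD2 : ∀ t : ℝ, 0 ≤ t → (A + t • S).PosDef := fun t ht =>
    hA.add_posSemidef (psd_smul hS ht)
  have hder : ∀ t : ℝ, 0 ≤ t →
      HasDerivAt h ((((D ((A + P) + t • S)).transpose * S).trace)
        - (((D (A + t • S)).transpose * S).trace)) t := fun t ht =>
    (key_deriv g D hdiff (A + P) S t (hPD1 t ht)).sub
      (key_deriv g D hdiff A S t (hPD2 t ht))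
  have hanti : AntitoneOn h (Set.Icc 0 1) := by
    refine antitoneOn_of_deriv_nonpos (convex_Icc 0 1) ?_ ?_ ?_
    · intro t ht
      exact ((hder t ht.1).continuousAt).continuousWithinAt
    · intro t ht
      rw [interior_Icc] at ht
      exact ((hder t ht.1.le).differentiableAt).differentiableWithinAt
    · intro t ht
      rw [interior_Icc] at ht
      rw [(hder t ht.1.le).deriv]
      have hdiffPSD : (D (A + t • S) - D ((A + P) + t • S)).PosSemidef := by
        refine hDanti _ _ (hPD1 t ht.1.le) (hPD2 t ht.1.le) ?_
        have : (A + P) + t • S - (A + t • S) = P := by abel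
        rwa [this]
      have htr := trace_mul_psd_nonneg hdiffPSD hS
      rw [Matrix.transpose_sub, Matrix.sub_mul, Matrix.trace_sub] at htr
      linarith
  have := hanti (Set.mem_Icc.mpr ⟨le_refl 0, zero_le_one⟩)
    (Set.mem_Icc.mpr ⟨zero_le_one, le_refl 1⟩) zero_le_one
  simp only [hh, zero_smul, add_zero, one_smul] at this
  linarith

end Calc


/-- If `g` is Fréchet differentiable at every symmetric PD matrix `A` with
derivative `H ↦ trace(D(A)ᵀ H)`, where `D(A)` is symmetric PSD and `D` is
antitone for the Loewner order, then `f(X) = g(Q₀ + ∑_{k∈X} Q_k)` is monotone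
and submodular. -/
theorem stmt_3 {n K : Type*} [Fintype n] [DecidableEq n] [Fintype K] [DecidableEq K]
    (Q0 : Matrix n n ℝ) (Q : K → Matrix n n ℝ)
    (hQ0 : Q0.PosDef) (hQ : ∀ k, (Q k).PosSemidef)
    (g : Matrix n n ℝ → ℝ) (D : Matrix n n ℝ → Matrix n n ℝ)
    (hdiff : ∀ A : Matrix n n ℝ, A.PosDef →
      ∃ L : Matrix n n ℝ →L[ℝ] ℝ,
        (∀ H : Matrix n n ℝ, L H = ((D A).transpose * H).trace) ∧
        HasFDerivAt g L A)
    (hDpsd : ∀ A : Matrix n n ℝ, A.PosDef → (D A).PosSemidef)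
    (hDanti : ∀ A B : Matrix n n ℝ, A.PosDef → B.PosDef →
      (A - B).PosSemidef → (D B - D A).PosSemidef)
    (f : Finset K → ℝ)
    (hf : ∀ X : Finset K, f X = g (Q0 + ∑ k ∈ X, Q k)) :
    (∀ X Y : Finset K, X ⊆ Y → f X ≤ f Y) ∧
    (∀ X Y : Finset K, X ⊆ Y → ∀ s, s ∉ Y →
      f (insert s Y) - f Y ≤ f (insert s X) - f X) := by

  have hPsum : ∀ Z : Finset K, (∑ k ∈ Z, Q k).PosSemidef := fun Z =>
    Finset.sum_induction _ _ (fun a b ha hb => ha.add hb) Matrix.PosSemidef.zero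
      (fun k _ => hQ k)
  have hPD : ∀ Z : Finset K, (Q0 + ∑ k ∈ Z, Q k).PosDef := fun Z =>
    hQ0.add_posSemidef (hPsum Z)
  constructor
  · intro X Y hXY
    rw [hf X, hf Y]
    have hY : ∑ k ∈ Y, Q k = ∑ k ∈ Y \ X, Q k + ∑ k ∈ X, Q k :=
      (Finset.sum_sdiff hXY).symm
    rw [hY]
    have e : Q0 + (∑ k ∈ Y \ X, Q k + ∑ k ∈ X, Q k)
        = (Q0 + ∑ k ∈ X, Q k) + ∑ k ∈ Y \ X, Q k := by abel
    rw [e]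
    exact gmono g D hdiff hDpsd (hPD X) (hPsum _)
  · intro X Y hXY s hs
    have hsX : s ∉ X := fun h => hs (hXY h)
    rw [hf, hf, hf, hf, Finset.sum_insert hs, Finset.sum_insert hsX]
    have hY : ∑ k ∈ Y, Q k = ∑ k ∈ Y \ X, Q k + ∑ k ∈ X, Q k :=
      (Finset.sum_sdiff hXY).symm
    rw [hY]
    have key := gsubmod g D hdiff hDanti (A := Q0 + ∑ k ∈ X, Q k)
      (P := ∑ k ∈ Y \ X, Q k) (S := Q s) (hPD X) (hPsum _) (hQ s)
    have e1 : Q0 + (Q s + (∑ k ∈ Y \ X, Q k + ∑ k ∈ X, Q k))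
        = Q0 + ∑ k ∈ X, Q k + ∑ k ∈ Y \ X, Q k + Q s := by abel
    have e2 : Q0 + (∑ k ∈ Y \ X, Q k + ∑ k ∈ X, Q k)
        = Q0 + ∑ k ∈ X, Q k + ∑ k ∈ Y \ X, Q k := by abel
    have e3 : Q0 + (Q s + ∑ k ∈ X, Q k)
        = Q0 + ∑ k ∈ X, Q k + Q s := by abel
    rw [e1, e2, e3]
    exact key
end

section
/- Let A be an n×n real symmetric positive definite matrix and let S and B be n×n real symmetric positive semidefinite matrices. Then the function δ(λ) := log det(A + S + λB) − log det(A + λB) is nonincreasing in λ on [0, ∞); its derivative at each λ ≥ 0 equals trace([(A + S + λB)⁻¹ − (A + λB)⁻¹] · B), which is nonpositive. -/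
open Matrix Polynomial
open scoped MatrixOrder

private lemma psd_smul_s8 {n : Type*} [Fintype n] {B : Matrix n n ℝ} (hB : B.PosSemidef)
    {l : ℝ} (hl : 0 ≤ l) : (l • B).PosSemidef := by
  refine ⟨?_, fun x => ?_⟩
  · unfold Matrix.IsHermitian
    rw [conjTranspose_smul, hB.1.eq]
    simp
  · exact (hB.smul hl).2 x

private lemma psd_trace_nonneg_s8 {n : Type*} [Fintype n] [DecidableEq n]
    {P : Matrix n n ℝ} (hP : P.PosSemidef) : 0 ≤ P.trace := by
  refine Finset.sum_nonneg fun i _ => ?_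
  exact hP.diag_nonneg

private lemma psd_trace_mul_nonneg {n : Type*} [Fintype n] [DecidableEq n]
    {P B : Matrix n n ℝ} (hP : P.PosSemidef) (hB : B.PosSemidef) :
    0 ≤ (P * B).trace := by
  have hs := CFC.sqrt_mul_sqrt_self P hP.nonneg
  have h1 : (CFC.sqrt P * B * CFC.sqrt P).trace = (P * B).trace := by
    rw [Matrix.trace_mul_cycle, hs]
  rw [← h1]
  have hconj : (CFC.sqrt P * B * CFC.sqrt P).PosSemidef := by
    have := hB.conjTranspose_mul_mul_same (CFC.sqrt P)
    rwa [(CFC.sqrt_nonneg P).posSemidef.1.eq] at this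
  exact psd_trace_nonneg_s8 hconj

/-- inverse antitonicity consequence: trace(((X+S)⁻¹ - X⁻¹) B) ≤ 0 -/
private lemma trace_inv_sub_inv_mul_nonpos {n : Type*} [Fintype n] [DecidableEq n]
    {X S B : Matrix n n ℝ} (hX : X.PosDef) (hS : S.PosSemidef) (hB : B.PosSemidef) :
    (((X + S)⁻¹ - X⁻¹) * B).trace ≤ 0 := by
  have hY : (X + S).PosDef := hX.add_posSemidef hS
  set Y := X + S with hYdef
  have hXu : IsUnit X.det := isUnit_iff_ne_zero.mpr hX.det_pos.ne'
  have hYu : IsUnit Y.det := isUnit_iff_ne_zero.mpr hY.det_pos.ne'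
  have hinner : (S + S * X⁻¹ * S).PosSemidef := by
    refine hS.add ?_
    have := hX.posSemidef.inv.conjTranspose_mul_mul_same S
    rwa [hS.1.eq] at this
  have hW0 : ((Y⁻¹)ᴴ * (S + S * X⁻¹ * S) * Y⁻¹).PosSemidef :=
    hinner.conjTranspose_mul_mul_same Y⁻¹
  rw [hY.1.inv.eq] at hW0
  have hiden : Y⁻¹ * (S + S * X⁻¹ * S) * Y⁻¹ = X⁻¹ - Y⁻¹ := by
    have hSY : S = Y - X := by rw [hYdef]; abel
    have e1 : ∀ C : Matrix n n ℝ, C * X⁻¹ * X = C := fun C =>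
      Matrix.nonsing_inv_mul_cancel_right _ _ hXu
    have e2 : X * X⁻¹ = 1 := Matrix.mul_nonsing_inv _ hXu
    have f1 : ∀ C : Matrix n n ℝ, Y⁻¹ * (Y * C) = C := fun C =>
      Matrix.nonsing_inv_mul_cancel_left _ _ hYu
    have f2 : Y⁻¹ * Y = 1 := Matrix.nonsing_inv_mul _ hYu
    have f3 : ∀ C : Matrix n n ℝ, C * Y * Y⁻¹ = C := fun C =>
      Matrix.mul_nonsing_inv_cancel_right _ _ hYu
    have h2 : S + S * X⁻¹ * S = Y * X⁻¹ * Y - Y := by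
      rw [hSY]
      simp only [Matrix.sub_mul, Matrix.mul_sub, e1, e2, Matrix.one_mul]
      abel
    rw [h2, Matrix.mul_sub, Matrix.sub_mul, f2, Matrix.one_mul,
      ← Matrix.mul_assoc, ← Matrix.mul_assoc, f2, Matrix.one_mul, f3]
  rw [hiden] at hW0
  have := psd_trace_mul_nonneg hW0 hB
  have hflip : (Y⁻¹ - X⁻¹) * B = -((X⁻¹ - Y⁻¹) * B) := by
    rw [← Matrix.neg_mul, neg_sub]
  rw [hflip, Matrix.trace_neg]
  linarith

/-- derivative of log det along a line -/
private lemma logdet_hasDerivAt {n : Type*} [Fintype n] [DecidableEq n]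
    (M B : Matrix n n ℝ) (l : ℝ) (hX : (M + l • B).PosDef) :
    HasDerivAt (fun t => Real.log (M + t • B).det) (((M + l • B)⁻¹ * B).trace) l := by
  set X := M + l • B with hXdef
  have hdet : X.det ≠ 0 := hX.det_pos.ne'
  have hXu : IsUnit X.det := isUnit_iff_ne_zero.mpr hdet
  set c : ℝ := ((X⁻¹ * B)).trace with hc
  set Q : Polynomial ℝ :=
    (Matrix.det (1 + (Polynomial.X : ℝ[X]) • (X⁻¹ * B).map Polynomial.C)).divX.divX with hQ
  have hfun : ∀ t : ℝ, (M + t • B).det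
      = X.det * (1 + c * (t - l) + Q.eval (t - l) * (t - l) ^ 2) := by
    intro t
    have h1 : M + t • B = X * (1 + (t - l) • (X⁻¹ * B)) := by
      rw [Matrix.mul_add, Matrix.mul_one, Matrix.mul_smul,
        Matrix.mul_nonsing_inv_cancel_left _ _ hXu, hXdef]
      rw [add_assoc, ← add_smul]
      have ht : l + (t - l) = t := by ring
      rw [ht]
    rw [h1, Matrix.det_mul, Matrix.det_one_add_smul]
  -- derivative of the explicit polynomial expression
  have h1 : HasDerivAt (fun t : ℝ => t - l) 1 l := (hasDerivAt_id l).sub_const l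
  have hcd : HasDerivAt (fun t : ℝ => c * (t - l)) c l := by
    simpa using h1.const_mul c
  have hQd : HasDerivAt (fun t : ℝ => Q.eval (t - l)) (Q.derivative.eval (l - l) * 1) l := by
    have := HasDerivAt.comp (h₂ := fun s : ℝ => Q.eval s) (h := fun t : ℝ => t - l)
      l (Q.hasDerivAt (l - l)) h1
    simpa [Function.comp_def] using this
  have hsq : HasDerivAt (fun t : ℝ => (t - l) ^ 2) ((2 : ℕ) * (l - l) ^ 1 * 1) l := h1.pow 2
  have hprod := hQd.mul hsq
  have hsum := ((hasDerivAt_const l (1 : ℝ)).add hcd).add hprod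
  have hall := hsum.const_mul X.det
  have hdet_deriv : HasDerivAt (fun t => (M + t • B).det) (X.det * c) l := by
    have heq : (fun t : ℝ => X.det * (1 + c * (t - l) + Q.eval (t - l) * (t - l) ^ 2))
        = fun t => (M + t • B).det := by
      funext t; rw [hfun t]
    simp only [Pi.add_def, Pi.mul_def] at hall
    rw [heq] at hall
    refine hall.congr_deriv ?_
    simp
  have hlog : HasDerivAt (fun t => Real.log (M + t • B).det)
      (((M + l • B).det)⁻¹ * (X.det * c)) l := by
    have := HasDerivAt.comp (h₂ := Real.log) (h := fun t => (M + t • B).det)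
      l (Real.hasDerivAt_log (by simpa [← hXdef] using hdet)) hdet_deriv
    simpa [Function.comp_def] using this
  have : ((M + l • B).det)⁻¹ * (X.det * c) = c := by
    rw [← hXdef, ← mul_assoc, inv_mul_cancel₀ hdet, one_mul]
  rw [this] at hlog
  exact hlog

/-- For `A` symmetric PD and `S, B` symmetric PSD, the function
`δ(λ) = log det(A + S + λB) − log det(A + λB)` has derivative
`trace([(A + S + λB)⁻¹ − (A + λB)⁻¹] B) ≤ 0` at every `λ ≥ 0`, and is
nonincreasing on `[0, ∞)`. -/
theorem stmt_8 {n : Type*} [Fintype n] [DecidableEq n]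
    (A S B : Matrix n n ℝ) (hA : A.PosDef) (hS : S.PosSemidef) (hB : B.PosSemidef)
    (δ : ℝ → ℝ)
    (hδ : ∀ l : ℝ, δ l = Real.log (A + S + l • B).det - Real.log (A + l • B).det) :
    (∀ l : ℝ, 0 ≤ l →
      HasDerivAt δ ((((A + S + l • B)⁻¹ - (A + l • B)⁻¹) * B).trace) l ∧
      (((A + S + l • B)⁻¹ - (A + l • B)⁻¹) * B).trace ≤ 0) ∧
    AntitoneOn δ (Set.Ici (0 : ℝ)) := by
  have main : ∀ l : ℝ, 0 ≤ l →
      HasDerivAt δ ((((A + S + l • B)⁻¹ - (A + l • B)⁻¹) * B).trace) l ∧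
      (((A + S + l • B)⁻¹ - (A + l • B)⁻¹) * B).trace ≤ 0 := by
    intro l hl
    have hXpd : (A + l • B).PosDef := hA.add_posSemidef (psd_smul_s8 hB hl)
    have hYpd : (A + S + l • B).PosDef := (hA.add_posSemidef hS).add_posSemidef (psd_smul_s8 hB hl)
    constructor
    · have hd1 := logdet_hasDerivAt (A + S) B l hYpd
      have hd2 := logdet_hasDerivAt A B l hXpd
      have hsub := hd1.sub hd2
      have heq : (fun t => Real.log (A + S + t • B).det - Real.log (A + t • B).det) = δ :=
        funext fun t => (hδ t).symm
      simp only [Pi.sub_def] at hsub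
      rw [heq] at hsub
      have : ((A + S + l • B)⁻¹ * B).trace - ((A + l • B)⁻¹ * B).trace
          = (((A + S + l • B)⁻¹ - (A + l • B)⁻¹) * B).trace := by
        rw [Matrix.sub_mul, Matrix.trace_sub]
      rwa [this] at hsub
    · have key := trace_inv_sub_inv_mul_nonpos hXpd hS hB
      have : A + l • B + S = A + S + l • B := by abel
      rwa [this] at key
  refine ⟨main, ?_⟩
  have hanti : AntitoneOn δ (Set.Ici (0 : ℝ)) := by
    refine antitoneOn_of_deriv_nonpos (convex_Ici 0) ?_ ?_ ?_
    · intro x hx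
      exact ((main x hx).1.continuousAt).continuousWithinAt
    · intro x hx
      rw [interior_Ici] at hx
      exact ((main x (le_of_lt hx)).1.differentiableAt).differentiableWithinAt
    · intro x hx
      rw [interior_Ici] at hx
      rw [(main x (le_of_lt hx)).1.deriv]
      exact (main x (le_of_lt hx)).2
  exact hanti
end

section
/- Let K be a finite set, let f : 2^K → ℝ be normalized, monotone, and submodular, and let B be a positive natural number with B ≤ |K|. Let G₀ = ∅ and, for i = 0, 1, …, B−1, let G_{i+1} = G_i ∪ {s_i} where s_i ∈ K \ G_i satisfies f(G_i ∪ {s_i}) − f(G_i) ≥ f(G_i ∪ {k}) − f(G_i) for all k ∈ K \ G_i (a greedy choice). Then f(G_B) ≥ (1 − 1/e) · max{ f(S) : S ⊆ K, |S| ≤ B }. -/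
/-- Nemhauser–Wolsey–Fisher greedy guarantee: for a normalized, monotone,
submodular set function `f` on a finite set `K` and a cardinality budget
`B ≤ |K|`, the greedy algorithm's output `G B` satisfies
`f(G B) ≥ (1 − 1/e) · max{ f S : |S| ≤ B }`. -/
theorem stmt_10 {K : Type*} [Fintype K] [DecidableEq K]
    (f : Finset K → ℝ)
    (hnorm : f ∅ = 0)
    (hmono : ∀ X Y : Finset K, X ⊆ Y → f X ≤ f Y)
    (hsub : ∀ X Y : Finset K, X ⊆ Y → ∀ s, s ∉ Y →
      f (insert s Y) - f Y ≤ f (insert s X) - f X)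
    (B : ℕ) (hB0 : 0 < B) (hBcard : B ≤ Fintype.card K)
    (G : ℕ → Finset K) (s : ℕ → K)
    (hG0 : G 0 = ∅)
    (hstep : ∀ i < B, s i ∉ G i ∧ G (i + 1) = insert (s i) (G i) ∧
      ∀ k : K, k ∉ G i →
        f (insert k (G i)) - f (G i) ≤ f (insert (s i) (G i)) - f (G i)) :
    ∀ S : Finset K, S.card ≤ B →
      (1 - 1 / Real.exp 1) * f S ≤ f (G B) := by
  intro S hS
  -- Lemma A: submodularity gives f (Gi ∪ T) ≤ f Gi + ∑ marginal gains
  have lemA : ∀ (T Gi : Finset K), Disjoint T Gi →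
      f (Gi ∪ T) ≤ f Gi + ∑ k ∈ T, (f (insert k Gi) - f Gi) := by
    intro T
    induction T using Finset.induction_on with
    | empty => intro Gi _; simp
    | @insert a T' ha ih =>
      intro Gi hdisj
      have haGi : a ∉ Gi := by
        have := Finset.disjoint_left.mp hdisj (Finset.mem_insert_self a T')
        exact this
      have hdisj' : Disjoint T' Gi :=
        hdisj.mono_left (Finset.subset_insert a T')
      have haGT : a ∉ Gi ∪ T' := by
        simp [haGi, ha]
      have h1 : f (insert a (Gi ∪ T')) - f (Gi ∪ T') ≤ f (insert a Gi) - f Gi :=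
        hsub Gi (Gi ∪ T') Finset.subset_union_left a haGT
      have h2 := ih Gi hdisj'
      have heq : Gi ∪ insert a T' = insert a (Gi ∪ T') := by
        ext x; simp [or_comm, or_left_comm]
      rw [heq, Finset.sum_insert ha]
      linarith
  have hfS0 : 0 ≤ f S := by
    have := hmono ∅ S (Finset.empty_subset S)
    linarith [this, hnorm.symm ▸ this]
  -- key step inequality
  have key : ∀ i < B, f S - f (G (i + 1)) ≤ (1 - 1 / (B : ℝ)) * (f S - f (G i)) := by
    intro i hi
    obtain ⟨hsi, hGi1, hgreedy⟩ := hstep i hi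
    set δ : ℝ := f (insert (s i) (G i)) - f (G i) with hδ
    have hδ0 : 0 ≤ δ := by
      have := hmono (G i) (insert (s i) (G i)) (Finset.subset_insert _ _)
      linarith
    have hdisj : Disjoint (S \ G i) (G i) := Finset.sdiff_disjoint
    have h1 : f S ≤ f (G i ∪ (S \ G i)) :=
      hmono S _ (fun x hx => by
        by_cases hxG : x ∈ G i
        · exact Finset.mem_union_left _ hxG
        · exact Finset.mem_union_right _ (Finset.mem_sdiff.mpr ⟨hx, hxG⟩))
    have h2 := lemA (S \ G i) (G i) hdisj
    have h3 : ∑ k ∈ S \ G i, (f (insert k (G i)) - f (G i)) ≤ (S \ G i).card • δ := by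
      apply Finset.sum_le_card_nsmul
      intro k hk
      exact hgreedy k (Finset.mem_sdiff.mp hk).2
    have hcard : ((S \ G i).card : ℝ) ≤ (B : ℝ) := by
      exact_mod_cast le_trans (Finset.card_le_card (Finset.sdiff_subset)) hS
    have h4 : ((S \ G i).card : ℝ) * δ ≤ (B : ℝ) * δ :=
      mul_le_mul_of_nonneg_right hcard hδ0
    have h5 : f S ≤ f (G i) + (B : ℝ) * δ := by
      rw [nsmul_eq_mul] at h3
      linarith
    have hBpos : (0 : ℝ) < (B : ℝ) := by exact_mod_cast hB0
    have hδlb : (f S - f (G i)) / (B : ℝ) ≤ δ := by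
      rw [div_le_iff₀ hBpos]; linarith
    have : f (G (i + 1)) = f (G i) + δ := by rw [hGi1]; ring
    rw [this]
    have : (1 - 1 / (B : ℝ)) * (f S - f (G i))
        = (f S - f (G i)) - (f S - f (G i)) / (B : ℝ) := by
      field_simp
    rw [this]
    linarith
  set r : ℝ := 1 - 1 / (B : ℝ) with hr
  have hBpos : (0 : ℝ) < (B : ℝ) := by exact_mod_cast hB0
  have hr0 : 0 ≤ r := by
    have h : 1 / (B : ℝ) ≤ 1 := by
      rw [div_le_one hBpos]; exact_mod_cast hB0
    rw [hr]; linarith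
  have hind : ∀ n ≤ B, f S - f (G n) ≤ r ^ n * f S := by
    intro n
    induction n with
    | zero => intro _; simp [hG0, hnorm]
    | succ n ih =>
      intro hn
      have hnB : n < B := hn
      have h1 := key n hnB
      have h2 := ih (le_of_lt hnB)
      calc f S - f (G (n + 1)) ≤ r * (f S - f (G n)) := h1
        _ ≤ r * (r ^ n * f S) := mul_le_mul_of_nonneg_left h2 hr0
        _ = r ^ (n + 1) * f S := by ring
  have hend := hind B le_rfl
  have hrexp : r ≤ Real.exp (-(1 / (B : ℝ))) := by
    have := Real.add_one_le_exp (-(1 / (B : ℝ)))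
    linarith
  have hpow : r ^ B ≤ (Real.exp 1)⁻¹ := by
    calc r ^ B ≤ Real.exp (-(1 / (B : ℝ))) ^ B := pow_le_pow_left₀ hr0 hrexp B
      _ = Real.exp ((B : ℝ) * (-(1 / (B : ℝ)))) := (Real.exp_nat_mul _ B).symm
      _ = Real.exp (-1) := by
          congr 1
          field_simp
      _ = (Real.exp 1)⁻¹ := by rw [Real.exp_neg]
  have h6 : r ^ B * f S ≤ (Real.exp 1)⁻¹ * f S :=
    mul_le_mul_of_nonneg_right hpow hfS0
  have : (1 - 1 / Real.exp 1) * f S = f S - (Real.exp 1)⁻¹ * f S := by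
    field_simp
  rw [this]
  linarith
end

section
/- Let ω ∈ ℝ³ with ‖ω‖ = 1, and let J(ω) denote the 3×3 skew-symmetric cross-product matrix of ω (so that J(ω)v = ω × v for all v ∈ ℝ³). Then for every t ∈ ℝ, the matrix exponential satisfies exp(t · J(ω)) = I + sin(t) · J(ω) + (1 − cos(t)) · J(ω)² (Rodrigues' rotation formula). -/
open scoped Matrix

/-- The 3×3 skew-symmetric cross-product matrix of `ω`, satisfying
`J(ω) *ᵥ v = ω × v`. -/
def crossMatrix (ω : EuclideanSpace ℝ (Fin 3)) : Matrix (Fin 3) (Fin 3) ℝ :=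
  !![0, -ω 2, ω 1; ω 2, 0, -ω 0; -ω 1, ω 0, 0]

open NormedSpace in
/-- Rodrigues' rotation formula: for a unit vector `ω ∈ ℝ³` and any `t ∈ ℝ`,
`exp(t J(ω)) = I + sin t · J(ω) + (1 − cos t) · J(ω)²`. -/
theorem stmt_11 (ω : EuclideanSpace ℝ (Fin 3)) (hω : ‖ω‖ = 1) (t : ℝ) :
    NormedSpace.exp (t • crossMatrix ω) =
      1 + Real.sin t • crossMatrix ω +
        (1 - Real.cos t) • (crossMatrix ω * crossMatrix ω) := by
  letI : SeminormedRing (Matrix (Fin 3) (Fin 3) ℝ) := Matrix.linftyOpSemiNormedRing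
  letI : NormedRing (Matrix (Fin 3) (Fin 3) ℝ) := Matrix.linftyOpNormedRing
  letI : NormedAlgebra ℝ (Matrix (Fin 3) (Fin 3) ℝ) := Matrix.linftyOpNormedAlgebra
  set J := crossMatrix ω with hJdef
  -- squared norm condition
  have hnorm : ω 0 ^ 2 + ω 1 ^ 2 + ω 2 ^ 2 = 1 := by
    have h := hω
    rw [EuclideanSpace.norm_eq] at h
    have h2 : (ω 0) ^ 2 + ω 1 ^ 2 + ω 2 ^ 2 =
        ∑ i : Fin 3, ‖ω i‖ ^ 2 := by
      simp [Fin.sum_univ_three, Real.norm_eq_abs, sq_abs]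
    rw [h2]
    have hnn : (0:ℝ) ≤ ∑ i : Fin 3, ‖ω i‖ ^ 2 :=
      Finset.sum_nonneg fun i _ => sq_nonneg _
    nlinarith [Real.sq_sqrt hnn, Real.sqrt_nonneg (∑ i : Fin 3, ‖ω i‖ ^ 2)]
  have hJ3 : J * J * J = -J := by
    have hc : J = !![0, -ω 2, ω 1; ω 2, 0, -ω 0; -ω 1, ω 0, 0] := rfl
    ext i j
    fin_cases i <;> fin_cases j
    · simp [hc, Matrix.mul_apply, Fin.sum_univ_three]
      linear_combination (0:ℝ) * hnorm
    · simp [hc, Matrix.mul_apply, Fin.sum_univ_three]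
      linear_combination ω 2 * hnorm
    · simp [hc, Matrix.mul_apply, Fin.sum_univ_three]
      linear_combination -ω 1 * hnorm
    · simp [hc, Matrix.mul_apply, Fin.sum_univ_three]
      linear_combination -ω 2 * hnorm
    · simp [hc, Matrix.mul_apply, Fin.sum_univ_three]
      linear_combination (0:ℝ) * hnorm
    · simp [hc, Matrix.mul_apply, Fin.sum_univ_three]
      linear_combination ω 0 * hnorm
    · simp [hc, Matrix.mul_apply, Fin.sum_univ_three]
      linear_combination ω 1 * hnorm
    · simp [hc, Matrix.mul_apply, Fin.sum_univ_three]
      linear_combination -ω 0 * hnorm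
    · simp [hc, Matrix.mul_apply, Fin.sum_univ_three]
      linear_combination (0:ℝ) * hnorm
  set f : ℝ → Matrix (Fin 3) (Fin 3) ℝ :=
    fun s => 1 + Real.sin s • J + (1 - Real.cos s) • (J * J) with hfdef
  have hfJ : ∀ s, f s * J = Real.cos s • J + Real.sin s • (J * J) := by
    intro s
    simp only [hfdef, add_mul, one_mul, Matrix.smul_mul, ← mul_assoc, hJ3]
    module
  have hcomm : ∀ s : ℝ, exp (s • -J) * J = J * exp (s • -J) := by
    intro s
    have h : Commute (s • -J) J := ((Commute.refl J).neg_left).smul_left s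
    exact h.exp_left
  have hg : ∀ s : ℝ, HasDerivAt (fun u => f u * exp (u • -J)) 0 s := by
    intro s
    have h1 : HasDerivAt f (Real.cos s • J + Real.sin s • (J * J)) s := by
      have hs : HasDerivAt (fun u => Real.sin u • J) (Real.cos s • J) s :=
        (Real.hasDerivAt_sin s).smul_const J
      have hc : HasDerivAt (fun u => (1 - Real.cos u) • (J * J))
          (Real.sin s • (J * J)) s := by
        have : HasDerivAt (fun u => 1 - Real.cos u) (Real.sin s) s := by
          exact ((hasDerivAt_const s (1:ℝ)).sub (Real.hasDerivAt_cos s)).congr_deriv (by ring)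
        exact this.smul_const (J * J)
      exact (((hasDerivAt_const s (1 : Matrix (Fin 3) (Fin 3) ℝ)).add hs).add hc).congr_deriv (by simp)
    have h2 : HasDerivAt (fun u : ℝ => exp (u • -J)) (exp (s • -J) * -J) s :=
      hasDerivAt_exp_smul_const (-J) s
    have h3 := h1.mul h2
    have hz : (Real.cos s • J + Real.sin s • (J * J)) * exp (s • -J) +
        f s * (exp (s • -J) * -J) = 0 := by
      rw [← hfJ s, mul_neg, hcomm s, mul_neg, ← mul_assoc]
      exact add_neg_cancel _
    rwa [hz] at h3
  have hconst : ∀ s : ℝ, f s * exp (s • -J) = f 0 * exp ((0:ℝ) • -J) := by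
    intro s
    exact is_const_of_deriv_eq_zero (fun u => (hg u).differentiableAt)
      (fun u => (hg u).deriv) s 0
  have hf0 : f t * exp (t • -J) = 1 := by
    have := hconst t
    simp only [hfdef] at this ⊢
    simpa [exp_zero] using this
  have hinv : exp (t • -J) * exp (t • J) = 1 := by
    have hc : Commute (t • -J) (t • J) :=
      (((Commute.refl J).neg_left).smul_left t).smul_right t
    have h0 : t • -J + t • J = 0 := by simp
    exact (exp_add_of_commute_of_mem_ball (𝕂 := ℝ) hc (by simp [expSeries_radius_eq_top])
      (by simp [expSeries_radius_eq_top])).symm.trans (by rw [h0, exp_zero])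
  calc exp (t • J) = 1 * exp (t • J) := (one_mul _).symm
    _ = (f t * exp (t • -J)) * exp (t • J) := by rw [hf0]
    _ = f t * (exp (t • -J) * exp (t • J)) := by rw [mul_assoc]
    _ = f t := by rw [hinv, mul_one]
end
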